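/- Let R be a finite family of pairwise disjoint closed unit disks in ℝ² in which every disk is a boundary disk (the boundary of conv(⋃R) intersects every disk), and let P be any realization. Then the Hausdorff distance between the boundary of conv(centers of R) and the boundary of conv(P) is at most 1. -/

import Mathlib

open Metric Set

lemma cross_frontier {X : Type*} [TopologicalSpace X] {s t : Set X}
    (hs : IsPreconnected s) (h1 : (s ∩ t).Nonempty) (h2 : (s \ closure t).Nonempty) :
    (s ∩ frontier t).Nonempty := by
  by_contra h
  rw [not_nonempty_iff_eq_empty] at h
  have hdis : ∀ z ∈ s, z ∉ frontier t := fun z hz hzf =>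
    (eq_empty_iff_forall_notMem.mp h z) ⟨hz, hzf⟩
  have hsub : s ⊆ interior t ∪ (closure t)ᶜ := by
    intro z hz
    by_cases hc : z ∈ closure t
    · left
      by_contra hi
      exact hdis z hz ⟨hc, by simpa [frontier, mem_diff] using hi⟩
    · right; exact hc
  have hne1 : (s ∩ interior t).Nonempty := by
    obtain ⟨z, hzs, hzt⟩ := h1
    refine ⟨z, hzs, ?_⟩
    by_contra hi
    exact hdis z hzs ⟨subset_closure hzt, hi⟩
  have hne2 : (s ∩ (closure t)ᶜ).Nonempty := h2
  obtain ⟨z, _, hz1, hz2⟩ := hs (interior t) (closure t)ᶜ isOpen_interior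
    isClosed_closure.isOpen_compl hsub hne1 hne2
  exact hz2 (subset_closure (interior_subset hz1))

lemma frontier_infDist_le {E : Type*} [NormedAddCommGroup E] [InnerProductSpace ℝ E]
    [CompleteSpace E] {A B : Set E} {r : ℝ} (hr : 0 ≤ r)
    (hA : Convex ℝ A) (hAcl : IsClosed A)
    (h1 : ∀ x ∈ A, infDist x B ≤ r) (h2 : ∀ y ∈ closure B, infDist y A ≤ r)
    {x : E} (hx : x ∈ frontier A) : infDist x (frontier B) ≤ r := by
  have hxA : x ∈ A := hAcl.closure_eq ▸ hx.1
  have hAne : A.Nonempty := ⟨x, hxA⟩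
  by_cases hxB : x ∈ interior B
  · -- supporting-hyperplane (projection) argument
    refine le_of_forall_pos_le_add fun ε hε => ?_
    obtain ⟨ρ, hρ, hball⟩ := Metric.isOpen_iff.mp isOpen_interior x hxB
    set δ : ℝ := min (ε / 2) (ρ / 4) with hδdef
    have hδ : 0 < δ := lt_min (by linarith) (by linarith)
    -- a point outside A close to x
    have hxcl : x ∈ closure Aᶜ := by
      rw [frontier_eq_closure_inter_closure] at hx
      exact hx.2
    obtain ⟨y, hyA, hyd⟩ := Metric.mem_closure_iff.mp hxcl δ hδ
    rw [dist_comm] at hyd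
    -- project y onto A
    obtain ⟨x', hx'A, hx'min⟩ :=
      exists_norm_eq_iInf_of_complete_convex hAne hAcl.isComplete hA y
    have hproj : ∀ a ∈ A, inner ℝ (y - x') (a - x') ≤ (0 : ℝ) :=
      (norm_eq_iInf_iff_real_inner_le_zero hA hx'A).mp hx'min
    have hyx' : ‖y - x'‖ ≤ dist y x := by
      rw [hx'min]
      have hbdd : BddBelow (Set.range fun w : A => ‖y - (w : E)‖) :=
        ⟨0, by rintro _ ⟨w, rfl⟩; exact norm_nonneg _⟩
      calc (⨅ w : A, ‖y - (w : E)‖) ≤ ‖y - (⟨x, hxA⟩ : A)‖ := ciInf_le hbdd _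
        _ = dist y x := (dist_eq_norm y x).symm
    have hyne : y ≠ x' := fun h => hyA (h ▸ hx'A)
    have hnorm_pos : (0 : ℝ) < ‖y - x'‖ := by
      rwa [norm_pos_iff, sub_ne_zero]
    set u : E := ‖y - x'‖⁻¹ • (y - x') with hu
    have hunorm : ‖u‖ = 1 := by
      rw [hu, norm_smul, norm_inv, norm_norm, inv_mul_cancel₀ hnorm_pos.ne']
    have hxx' : dist x x' ≤ 2 * δ := by
      calc dist x x' ≤ dist x y + dist y x' := dist_triangle x y x'
        _ ≤ δ + δ := by
            refine add_le_add (by rw [dist_comm]; exact hyd.le) ?_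
            rw [dist_eq_norm]
            exact hyx'.trans (le_of_lt hyd)
        _ = 2 * δ := by ring
    have hx'B : x' ∈ B := by
      have : x' ∈ ball x ρ := by
        rw [mem_ball, dist_comm]
        have hδρ : δ ≤ ρ / 4 := min_le_right _ _
        calc dist x x' ≤ 2 * δ := hxx'
          _ < ρ := by linarith
      exact interior_subset (hball this)
    -- key: points on the ray from x' in direction u are far from A
    have hkey : ∀ t : ℝ, 0 ≤ t → ∀ a ∈ A, t ≤ dist (x' + t • u) a := by
      intro t ht a ha
      have heq : (inner ℝ (x' - a) (y - x') : ℝ) = -(inner ℝ (y - x') (a - x') : ℝ) := by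
        rw [show x' - a = -(a - x') from by abel, inner_neg_left, real_inner_comm]
      have h2' : (0 : ℝ) ≤ inner ℝ (x' - a) (y - x') := by
        rw [heq]; linarith [hproj a ha]
      have h1' : inner ℝ (x' - a) u ≥ (0 : ℝ) := by
        rw [hu, real_inner_smul_right]
        exact mul_nonneg (inv_nonneg.mpr (norm_nonneg _)) h2'
      have h3' : inner ℝ ((x' + t • u) - a) u = t + inner ℝ (x' - a) u := by
        have : (x' + t • u) - a = (x' - a) + t • u := by abel
        rw [this, inner_add_left, real_inner_smul_left, real_inner_self_eq_norm_sq, hunorm]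
        ring
      calc t ≤ t + inner ℝ (x' - a) u := by linarith
        _ = inner ℝ ((x' + t • u) - a) u := h3'.symm
        _ ≤ ‖(x' + t • u) - a‖ * ‖u‖ := real_inner_le_norm _ _
        _ = dist (x' + t • u) a := by rw [hunorm, mul_one, dist_eq_norm]
    have hfar : ∀ t : ℝ, 0 ≤ t → t ≤ infDist (x' + t • u) A := by
      intro t ht
      by_contra hlt
      push_neg at hlt
      obtain ⟨a, haA, hd⟩ := (infDist_lt_iff hAne).mp hlt
      exact absurd hd (not_lt.mpr (hkey t ht a haA))
    -- the segment from x' in direction u crosses the frontier of B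
    set f : ℝ → E := fun t => x' + t • u with hf
    have hfc : Continuous f := by continuity
    have hpre : IsPreconnected (f '' Icc 0 (r + 1)) :=
      (isPreconnected_Icc).image f hfc.continuousOn
    have hmem1 : (f '' Icc 0 (r + 1) ∩ B).Nonempty := by
      refine ⟨x', ⟨0, ⟨le_refl 0, by linarith⟩, by simp [hf]⟩, hx'B⟩
    have hmem2 : (f '' Icc 0 (r + 1) \ closure B).Nonempty := by
      refine ⟨f (r + 1), ⟨r + 1, ⟨by linarith, le_refl _⟩, rfl⟩, fun hcl => ?_⟩
      have := h2 _ hcl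
      have := hfar (r + 1) (by linarith)
      linarith
    obtain ⟨w, ⟨t, htIcc, hwf⟩, hwfr⟩ := cross_frontier hpre hmem1 hmem2
    have hwcl : w ∈ closure B := hwfr.1
    have htr : t ≤ r := by
      have := hfar t htIcc.1
      have := h2 w hwcl
      rw [← hwf] at this
      linarith
    have hdxw : dist x w ≤ 2 * δ + t := by
      calc dist x w ≤ dist x x' + dist x' w := dist_triangle x x' w
        _ ≤ 2 * δ + t := by
            refine add_le_add hxx' ?_
            rw [← hwf, dist_eq_norm]
            simp only [hf]
            rw [show x' - (x' + t • u) = -(t • u) by abel, norm_neg, norm_smul, hunorm,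
              mul_one, Real.norm_eq_abs, abs_of_nonneg htIcc.1]
    calc infDist x (frontier B) ≤ dist x w := infDist_le_dist_of_mem hwfr
      _ ≤ 2 * δ + t := hdxw
      _ ≤ r + ε := by
          have h2δ : 2 * δ ≤ ε := by have := min_le_left (ε/2) (ρ/4); nlinarith
          linarith
  · by_cases hxc : x ∈ closure B
    · have : x ∈ frontier B := ⟨hxc, hxB⟩
      rw [infDist_zero_of_mem this]
      exact hr
    · rcases B.eq_empty_or_nonempty with rfl | hBne
      · simp [hr]
      refine le_of_forall_pos_le_add fun ε hε => ?_
      have hxlt : infDist x B < r + ε := lt_of_le_of_lt (h1 x hxA) (by linarith)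
      obtain ⟨b, hbB, hbd⟩ := (infDist_lt_iff hBne).mp hxlt
      set f : ℝ → E := fun t => x + t • (b - x) with hf
      have hfc : Continuous f := by continuity
      have hpre : IsPreconnected (f '' Icc 0 1) :=
        (isPreconnected_Icc).image f hfc.continuousOn
      have hmem1 : (f '' Icc 0 1 ∩ B).Nonempty :=
        ⟨b, ⟨1, ⟨zero_le_one, le_refl _⟩, by simp [hf]⟩, hbB⟩
      have hmem2 : (f '' Icc 0 1 \ closure B).Nonempty :=
        ⟨x, ⟨0, ⟨le_refl _, zero_le_one⟩, by simp [hf]⟩, hxc⟩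
      obtain ⟨w, ⟨t, htIcc, hwf⟩, hwfr⟩ := cross_frontier hpre hmem1 hmem2
      have hdxw : dist x w ≤ dist x b := by
        rw [← hwf, dist_eq_norm, dist_eq_norm]
        simp only [hf]
        rw [show x - (x + t • (b - x)) = -(t • (b - x)) by abel, norm_neg, norm_smul,
          Real.norm_eq_abs, abs_of_nonneg htIcc.1, show x - b = -(b - x) by abel, norm_neg]
        nlinarith [norm_nonneg (b - x), htIcc.2]
      calc infDist x (frontier B) ≤ dist x w := infDist_le_dist_of_mem hwfr
        _ ≤ dist x b := hdxw
        _ ≤ r + ε := le_of_lt hbd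

/-- Let `R` be a finite family of pairwise disjoint closed unit disks, each of which is a
boundary disk (the boundary of `conv (⋃ R)` intersects every disk), and let `P` be any
realization.  Then the Hausdorff distance between the boundary of the convex hull of the
centers and the boundary of the convex hull of `P` is at most `1`. -/
theorem stmt15 (n : ℕ) (c : Fin n → EuclideanSpace ℝ (Fin 2))
    (hdisj : ∀ i j, i ≠ j → Disjoint (closedBall (c i) 1) (closedBall (c j) 1))
    (hbdry : ∀ i, ((frontier (convexHull ℝ (⋃ j, closedBall (c j) 1))) ∩
      closedBall (c i) 1).Nonempty)
    (p : Fin n → EuclideanSpace ℝ (Fin 2))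
    (hp : ∀ i, p i ∈ closedBall (c i) 1) :
    hausdorffDist (frontier (convexHull ℝ (Set.range c)))
      (frontier (convexHull ℝ (Set.range p))) ≤ 1 := by
  set A := convexHull ℝ (Set.range c) with hAdef
  set B := convexHull ℝ (Set.range p) with hBdef
  have hAconv : Convex ℝ A := convex_convexHull ℝ _
  have hBconv : Convex ℝ B := convex_convexHull ℝ _
  have hAcomp : IsCompact A := Set.Finite.isCompact_convexHull (𝕜 := ℝ) (Set.finite_range c)
  have hBcomp : IsCompact B := Set.Finite.isCompact_convexHull (𝕜 := ℝ) (Set.finite_range p)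
  have hAcl : IsClosed A := hAcomp.isClosed
  have hBcl : IsClosed B := hBcomp.isClosed
  -- mutual thickening bounds
  have hAB : ∀ x ∈ A, infDist x B ≤ 1 := by
    intro x hxA
    have hsub : A ⊆ cthickening 1 B := by
      apply convexHull_min _ (hBconv.cthickening 1)
      rintro _ ⟨i, rfl⟩
      exact mem_cthickening_of_dist_le (c i) (p i) 1 B
        (subset_convexHull ℝ _ ⟨i, rfl⟩) (by have := hp i; rw [mem_closedBall, dist_comm] at this; exact this)
    have := mem_cthickening_iff.mp (hsub hxA)
    calc infDist x B = (EMetric.infEdist x B).toReal := rfl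
      _ ≤ (ENNReal.ofReal 1).toReal := ENNReal.toReal_mono ENNReal.ofReal_ne_top this
      _ = 1 := by simp
  have hBA : ∀ x ∈ B, infDist x A ≤ 1 := by
    intro x hxB
    have hsub : B ⊆ cthickening 1 A := by
      apply convexHull_min _ (hAconv.cthickening 1)
      rintro _ ⟨i, rfl⟩
      exact mem_cthickening_of_dist_le (p i) (c i) 1 A
        (subset_convexHull ℝ _ ⟨i, rfl⟩) (hp i)
    have := mem_cthickening_iff.mp (hsub hxB)
    calc infDist x A = (EMetric.infEdist x A).toReal := rfl
      _ ≤ (ENNReal.ofReal 1).toReal := ENNReal.toReal_mono ENNReal.ofReal_ne_top this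
      _ = 1 := by simp
  have hAB' : ∀ y ∈ closure B, infDist y A ≤ 1 := by
    intro y hy; exact hBA y (hBcl.closure_eq ▸ hy)
  have hBA' : ∀ y ∈ closure A, infDist y B ≤ 1 := by
    intro y hy; exact hAB y (hAcl.closure_eq ▸ hy)
  apply hausdorffDist_le_of_infDist zero_le_one
  · intro x hx
    exact frontier_infDist_le zero_le_one hAconv hAcl hAB hAB' hx
  · intro x hx
    exact frontier_infDist_le zero_le_one hBconv hBcl hBA hBA' hx
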